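/- Suppose ν ≥ 1 and let h : [0,T] → [0,1] be any measurable function. Then for every admissible control a : [0,T] → [0,β], the payoff J_h(a) = ∫₀ᵀ (h(s) − ν A(s)) e^{−A(s)} a(s) ds − ν A(T) e^{−A(T)} satisfies J_h(a) ≤ 0, with equality for the zero control a ≡ 0. In particular, in the one-lock game with ν ≥ 1, remaining silent is a best response against every strategy of the opponent, and both agents remaining silent is a Nash equilibrium. (Claim stated in the paper before Theorem 2.) -/

import Mathlib

open MeasureTheory Real Set
open scoped NNReal ENNReal

/-- Cumulative rate `A(t) = ∫₀ᵗ a(s) ds` of a control `a`. -/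
noncomputable def cum (a : ℝ → ℝ) (t : ℝ) : ℝ := ∫ s in (0:ℝ)..t, a s

/-- One-lock payoff of agent `i`:
`Jⁱ(a,b) = ∫₀ᵀ (e^{−B(s)} − ν A(s)) e^{−A(s)} a(s) ds − ν A(T) e^{−A(T)}`. -/
noncomputable def oneLockPayoff (T ν : ℝ) (a b : ℝ → ℝ) : ℝ :=
  (∫ s in (0:ℝ)..T,
      (Real.exp (-(cum b s)) - ν * cum a s) * Real.exp (-(cum a s)) * a s)
    - ν * cum a T * Real.exp (-(cum a T))

/-- Time-threshold control `Γ_β(ψ)(t) = β · 𝟙_{[0,ψ]}(t)`. -/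
noncomputable def threshold (β ψ : ℝ) : ℝ → ℝ :=
  fun t => if t ∈ Set.Icc (0:ℝ) ψ then β else 0

/-- One-lock payoff against a general measurable opponent-survival function
`h : [0,T] → [0,1]`:
`J_h(a) = ∫₀ᵀ (h(s) − ν A(s)) e^{−A(s)} a(s) ds − ν A(T) e^{−A(T)}`. -/
noncomputable def hPayoff (T ν : ℝ) (h : ℝ → ℝ) (a : ℝ → ℝ) : ℝ :=
  (∫ s in (0:ℝ)..T, (h s - ν * cum a s) * Real.exp (-(cum a s)) * a s)
    - ν * cum a T * Real.exp (-(cum a T))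


/-- Change of variables: `∫₀ᵀ g(A(s)) a(s) ds = ∫₀^{A(T)} g(u) du` for nonnegative
bounded measurable `a` supported in `[0,T]`. -/
lemma cum_subst (T : ℝ) (hT : 0 ≤ T) (a : ℝ → ℝ) (ha : Measurable a)
    (h0 : ∀ s, 0 ≤ a s) (hsupp : ∀ s, s ∉ Icc (0:ℝ) T → a s = 0)
    (haInt : Integrable a)
    (g : ℝ → ℝ) (hg : Continuous g) :
    ∫ s in (0:ℝ)..T, g (cum a s) * a s = ∫ u in (0:ℝ)..(cum a T), g u := by
  have hint : ∀ u v : ℝ, IntervalIntegrable a volume u v :=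
    fun u v => haInt.intervalIntegrable
  have Acont : Continuous (cum a) := intervalIntegral.continuous_primitive hint 0
  have Amono : Monotone (cum a) := by
    intro s t hst
    have h1 := intervalIntegral.integral_add_adjacent_intervals (hint 0 s) (hint s t)
    have h2 : 0 ≤ ∫ u in s..t, a u :=
      intervalIntegral.integral_nonneg hst (fun u _ => h0 u)
    simp only [cum]; linarith
  have A0 : cum a 0 = 0 := intervalIntegral.integral_same
  have Anonneg : ∀ t, 0 ≤ cum a t := by
    intro t
    rcases le_or_gt 0 t with h | h
    · rw [← A0]; exact Amono h
    · simp only [cum]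
      rw [intervalIntegral.integral_of_ge h.le]
      have : ∫ s in Ioc t 0, a s = 0 := by
        rw [integral_Ioc_eq_integral_Ioo]
        rw [setIntegral_congr_fun measurableSet_Ioo
          (fun s hs => hsupp s (fun hs' => absurd hs'.1 (not_le.2 hs.2)))]
        simp
      simp [this]
  have Aconst : ∀ t, T ≤ t → cum a t = cum a T := by
    intro t ht
    have h1 := intervalIntegral.integral_add_adjacent_intervals (hint 0 T) (hint T t)
    have h2 : ∫ s in T..t, a s = 0 := by
      rw [intervalIntegral.integral_of_le ht,
        setIntegral_congr_fun measurableSet_Ioc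
          (fun s hs => hsupp s (fun hs' => absurd hs'.2 (not_le.2 hs.1)))]
      simp
    simp only [cum]; linarith
  have Atop : ∀ t, cum a t ≤ cum a T := by
    intro t
    rcases le_or_gt t T with h | h
    · exact Amono h
    · exact le_of_eq (Aconst t h.le)
  set x := cum a T with hxdef
  have hx : 0 ≤ x := Anonneg T
  -- the control measure μ = a·Leb
  set n : ℝ → ℝ≥0 := fun s => (a s).toNNReal with hndef
  have hn : Measurable n := ha.real_toNNReal
  set μ : Measure ℝ := volume.withDensity (fun s => (n s : ℝ≥0∞)) with hμdef
  have hIicInt : ∀ t : ℝ, IntegrableOn a (Iic t) := fun t => haInt.integrableOn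
  have μIic : ∀ t : ℝ, μ (Iic t) = ENNReal.ofReal (∫ s in Iic t, a s) := by
    intro t
    rw [hμdef, withDensity_apply _ measurableSet_Iic]
    rw [ofReal_integral_eq_lintegral_ofReal (hIicInt t) (ae_of_all _ h0)]
    exact lintegral_congr fun s => by simp [hndef, ENNReal.ofReal]
  have IicVal : ∀ t, 0 ≤ t → ∫ s in Iic t, a s = cum a t := by
    intro t ht
    have hunion : Iic t = Iic 0 ∪ Ioc 0 t := (Set.Iic_union_Ioc_eq_Iic ht).symm
    rw [hunion, setIntegral_union (Set.Iic_disjoint_Ioc le_rfl) measurableSet_Ioc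
      (hIicInt 0) (haInt.integrableOn)]
    have h1 : ∫ s in Iic 0, a s = 0 := by
      rw [integral_Iic_eq_integral_Iio,
        setIntegral_congr_fun measurableSet_Iio
          (fun s hs => hsupp s (fun hs' => absurd hs'.1 (not_le.2 hs)))]
      simp
    rw [h1, zero_add, cum, intervalIntegral.integral_of_le ht]
  have μIicVal : ∀ t, 0 ≤ t → μ (Iic t) = ENNReal.ofReal (cum a t) := by
    intro t ht; rw [μIic t, IicVal t ht]
  have μuniv : μ univ = ENNReal.ofReal x := by
    rw [hμdef, withDensity_apply _ MeasurableSet.univ, Measure.restrict_univ]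
    rw [show (∫⁻ s, ((n s : ℝ≥0∞))) = ENNReal.ofReal (∫ s, a s) by
      rw [ofReal_integral_eq_lintegral_ofReal haInt (ae_of_all _ h0)]
      exact lintegral_congr fun s => by simp [hndef, ENNReal.ofReal]]
    congr 1
    rw [← setIntegral_eq_integral_of_forall_compl_eq_zero
      (s := Iic T) (fun s hs => hsupp s (fun hs' => hs hs'.2)),
      IicVal T hT]
  haveI hfin : IsFiniteMeasure μ := ⟨by rw [μuniv]; exact ENNReal.ofReal_lt_top⟩
  have hmap : Measure.map (cum a) μ = volume.restrict (Ioc 0 x) := by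
    refine MeasureTheory.Measure.ext_of_Iic _ _ (fun c => ?_)
    rw [Measure.map_apply Acont.measurable measurableSet_Iic,
        Measure.restrict_apply measurableSet_Iic]
    rcases lt_or_ge c 0 with hc | hc
    · have h1 : cum a ⁻¹' Iic c = ∅ := eq_empty_of_forall_notMem
        (fun s hs => absurd (le_trans (Anonneg s) hs) (not_le.2 hc))
      have h2 : Iic c ∩ Ioc 0 x = ∅ := eq_empty_of_forall_notMem
        (fun u hu => absurd (lt_of_le_of_lt hu.1 hc) (not_lt.2 hu.2.1.le))
      rw [h1, h2]; simp
    rcases le_or_gt x c with hxc | hcx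
    · have h1 : cum a ⁻¹' Iic c = univ := eq_univ_of_forall (fun s => (Atop s).trans hxc)
      have h2 : Iic c ∩ Ioc 0 x = Ioc 0 x := by
        ext u
        simp only [mem_inter_iff, mem_Iic, mem_Ioc]
        exact ⟨fun h => h.2, fun h => ⟨h.2.trans hxc, h⟩⟩
      rw [h1, h2, μuniv, Real.volume_Ioc, sub_zero]
    · set S := cum a ⁻¹' Iic c with hSdef
      have hS0 : (0:ℝ) ∈ S := by simp only [hSdef, mem_preimage, mem_Iic, A0]; exact hc
      have hSbdd : BddAbove S := ⟨T, fun s hs => by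
        by_contra hst; push_neg at hst
        exact absurd ((Aconst s hst.le) ▸ (hs : cum a s ≤ c)) (not_le.2 hcx)⟩
      have hSclosed : IsClosed S := IsClosed.preimage Acont isClosed_Iic
      set t₀ := sSup S with ht₀def
      have ht₀S : t₀ ∈ S := hSclosed.csSup_mem ⟨0, hS0⟩ hSbdd
      have ht₀0 : (0:ℝ) ≤ t₀ := le_csSup hSbdd hS0
      have hSIic : S = Iic t₀ := subset_antisymm (fun s hs => le_csSup hSbdd hs)
        (fun s hs => le_trans (Amono hs) (ht₀S : cum a t₀ ≤ c))
      have hAt₀ : cum a t₀ = c := by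
        refine le_antisymm ht₀S ?_
        by_contra hlt
        push_neg at hlt
        have hev : ∀ᶠ s in nhds t₀, cum a s < c :=
          (Acont.continuousAt).eventually_lt_const hlt
        obtain ⟨s, hst, hsc⟩ := hev.exists_gt
        exact absurd (le_csSup hSbdd (hsc.le : s ∈ S)) (not_le.2 hst)
      have h2 : Iic c ∩ Ioc 0 x = Ioc 0 c := by
        ext u
        simp only [mem_inter_iff, mem_Iic, mem_Ioc]
        exact ⟨fun h => ⟨h.2.1, h.1⟩, fun h => ⟨h.2, h.1, h.2.trans hcx.le⟩⟩
      rw [hSIic, μIicVal t₀ ht₀0, hAt₀, h2, Real.volume_Ioc, sub_zero]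
  have key : ∫ s, g (cum a s) ∂μ = ∫ u in (0:ℝ)..x, g u := by
    rw [← integral_map Acont.measurable.aemeasurable hg.aestronglyMeasurable, hmap,
        intervalIntegral.integral_of_le hx]
  have key2 : ∫ s, g (cum a s) * a s = ∫ s, g (cum a s) ∂μ := by
    rw [hμdef, integral_withDensity_eq_integral_smul hn]
    exact integral_congr_ae (ae_of_all _ fun s => by
      simp [hndef, NNReal.smul_def, Real.coe_toNNReal _ (h0 s), mul_comm])
  calc ∫ s in (0:ℝ)..T, g (cum a s) * a s
      = ∫ s in Ioc 0 T, g (cum a s) * a s := intervalIntegral.integral_of_le hT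
    _ = ∫ s in Icc 0 T, g (cum a s) * a s := (integral_Icc_eq_integral_Ioc).symm
    _ = ∫ s, g (cum a s) * a s := setIntegral_eq_integral_of_forall_compl_eq_zero
          (fun s hs => by rw [hsupp s hs, mul_zero])
    _ = ∫ s, g (cum a s) ∂μ := key2
    _ = ∫ u in (0:ℝ)..x, g u := key

lemma hPayoff_zero (T ν : ℝ) (h : ℝ → ℝ) : hPayoff T ν h (fun _ => 0) = 0 := by
  simp [hPayoff, cum]

lemma hPayoff_congr (T ν : ℝ) (hT : 0 ≤ T) (h₁ h₂ a : ℝ → ℝ)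
    (hh : ∀ s ∈ Icc (0:ℝ) T, h₁ s = h₂ s) :
    hPayoff T ν h₁ a = hPayoff T ν h₂ a := by
  unfold hPayoff
  congr 1
  refine intervalIntegral.integral_congr (fun s hs => ?_)
  rw [uIcc_of_le hT] at hs
  rw [hh s hs]

lemma indicator_facts (T β : ℝ) (f : ℝ → ℝ) (hf : Measurable f) (hβ : 0 ≤ β)
    (hr : ∀ t ∈ Icc (0:ℝ) T, f t ∈ Icc (0:ℝ) β) :
    Measurable ((Icc (0:ℝ) T).indicator f) ∧ (∀ s, 0 ≤ (Icc (0:ℝ) T).indicator f s) ∧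
    (∀ s, (Icc (0:ℝ) T).indicator f s ≤ β) ∧
    (∀ s, s ∉ Icc (0:ℝ) T → (Icc (0:ℝ) T).indicator f s = 0) ∧
    Integrable ((Icc (0:ℝ) T).indicator f) := by
  have hm : Measurable ((Icc (0:ℝ) T).indicator f) := hf.indicator measurableSet_Icc
  have h0 : ∀ s, 0 ≤ (Icc (0:ℝ) T).indicator f s := fun s => by
    by_cases hs : s ∈ Icc (0:ℝ) T
    · rw [indicator_of_mem hs]; exact (hr s hs).1
    · rw [indicator_of_notMem hs]
  have hb : ∀ s, (Icc (0:ℝ) T).indicator f s ≤ β := fun s => by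
    by_cases hs : s ∈ Icc (0:ℝ) T
    · rw [indicator_of_mem hs]; exact (hr s hs).2
    · rw [indicator_of_notMem hs]; exact hβ
  have hsupp : ∀ s, s ∉ Icc (0:ℝ) T → (Icc (0:ℝ) T).indicator f s = 0 :=
    fun s hs => indicator_of_notMem hs _
  refine ⟨hm, h0, hb, hsupp, ?_⟩
  have hIcc : IntegrableOn ((Icc (0:ℝ) T).indicator f) (Icc (0:ℝ) T) := by
    refine Integrable.mono' (integrable_const β) hm.aestronglyMeasurable ?_
    exact ae_of_all _ fun s => by
      rw [Real.norm_eq_abs, abs_of_nonneg (h0 s)]; exact hb s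
  have := hIcc.integrable_indicator measurableSet_Icc
  rwa [Set.indicator_indicator, Set.inter_self] at this

lemma cum_indicator_eq (T : ℝ) (f : ℝ → ℝ) (t : ℝ) (ht : t ∈ Icc (0:ℝ) T) :
    cum f t = cum ((Icc (0:ℝ) T).indicator f) t := by
  refine intervalIntegral.integral_congr (fun s hs => ?_)
  rw [uIcc_of_le ht.1] at hs
  have hmem : s ∈ Icc (0:ℝ) T := ⟨hs.1, hs.2.trans ht.2⟩
  exact (Set.indicator_of_mem hmem f).symm

lemma ii_of_bdd (T M : ℝ) (hT : 0 ≤ T) (φ : ℝ → ℝ) (hφ : Measurable φ)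
    (hb : ∀ s ∈ Ioc (0:ℝ) T, |φ s| ≤ M) : IntervalIntegrable φ volume 0 T := by
  rw [intervalIntegrable_iff_integrableOn_Ioc_of_le hT]
  refine Integrable.mono' (integrable_const M) hφ.aestronglyMeasurable ?_
  exact (ae_restrict_iff' measurableSet_Ioc).2 (ae_of_all _ (fun s hs => by
    rw [Real.norm_eq_abs]; exact hb s hs))

lemma hPayoff_nonpos (T ν β : ℝ) (hT : 0 < T) (hβ : 0 < β) (hν : 1 ≤ ν)
    (h : ℝ → ℝ) (hmeas : Measurable h) (hrange : ∀ t ∈ Icc (0:ℝ) T, h t ∈ Icc (0:ℝ) 1)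
    (a : ℝ → ℝ) (ha : Measurable a) (har : ∀ t ∈ Icc (0:ℝ) T, a t ∈ Icc (0:ℝ) β) :
    hPayoff T ν h a ≤ 0 := by
  obtain ⟨ha', h0', hb', hsupp', haInt⟩ := indicator_facts T β a ha hβ.le har
  set a' := (Icc (0:ℝ) T).indicator a with ha'def
  have payeq : hPayoff T ν h a = hPayoff T ν h a' := by
    unfold hPayoff
    rw [cum_indicator_eq T a T ⟨hT.le, le_rfl⟩]
    congr 1
    refine intervalIntegral.integral_congr (fun s hs => ?_)
    rw [uIcc_of_le hT.le] at hs
    rw [cum_indicator_eq T a s hs, ha'def, Set.indicator_of_mem hs]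
  rw [payeq]
  have hint' : ∀ u v : ℝ, IntervalIntegrable a' volume u v := fun u v => haInt.intervalIntegrable
  have hx : 0 ≤ cum a' T := intervalIntegral.integral_nonneg hT.le (fun s _ => h0' s)
  set x := cum a' T with hxdef
  have hcnonneg : ∀ s ∈ Icc (0:ℝ) T, 0 ≤ cum a' s :=
    fun s hs => intervalIntegral.integral_nonneg hs.1 (fun u _ => h0' u)
  have hcle : ∀ s ∈ Icc (0:ℝ) T, cum a' s ≤ x := by
    intro s hs
    have h1 := intervalIntegral.integral_add_adjacent_intervals (hint' 0 s) (hint' s T)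
    have h2 : 0 ≤ ∫ u in s..T, a' u :=
      intervalIntegral.integral_nonneg hs.2 (fun u _ => h0' u)
    simp only [cum, hxdef]; linarith [h1, h2]
  -- interval integrability of the two integrands
  have hM : ∀ φ : ℝ → ℝ, Measurable φ → (∀ s ∈ Icc (0:ℝ) T, |φ s| ≤ 1) →
      IntervalIntegrable (fun s => (φ s - ν * cum a' s) * Real.exp (-(cum a' s)) * a' s)
        volume 0 T := by
    intro φ hφ hφb
    have hcont : Continuous (cum a') := intervalIntegral.continuous_primitive hint' 0
    refine ii_of_bdd T ((1 + ν * x) * β) hT.le _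
      (((hφ.sub (measurable_const.mul hcont.measurable)).mul
        (hcont.measurable.neg.exp)).mul ha') (fun s hs => ?_)
    have hsI : s ∈ Icc (0:ℝ) T := ⟨hs.1.le, hs.2⟩
    have h1 : 0 ≤ cum a' s := hcnonneg s hsI
    have h2 : cum a' s ≤ x := hcle s hsI
    have he : Real.exp (-(cum a' s)) ≤ 1 := by
      rw [← Real.exp_zero]; exact Real.exp_le_exp.2 (by linarith)
    obtain ⟨hφl, hφu⟩ := abs_le.1 (hφb s hsI)
    have hν0 : (0:ℝ) ≤ ν := by linarith
    have hνc : 0 ≤ ν * cum a' s := mul_nonneg hν0 h1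
    have hνc2 : ν * cum a' s ≤ ν * x := mul_le_mul_of_nonneg_left h2 hν0
    rw [abs_mul, abs_mul, abs_of_nonneg (h0' s), abs_of_nonneg (Real.exp_pos _).le]
    have h3 : |φ s - ν * cum a' s| ≤ 1 + ν * x := abs_le.2 ⟨by linarith, by linarith⟩
    have h4 : |φ s - ν * cum a' s| * Real.exp (-(cum a' s)) ≤ (1 + ν * x) * 1 :=
      mul_le_mul h3 he (Real.exp_pos _).le (by nlinarith)
    calc |φ s - ν * cum a' s| * Real.exp (-(cum a' s)) * a' s
        ≤ ((1 + ν * x) * 1) * β :=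
          mul_le_mul h4 (hb' s) (h0' s) (by nlinarith)
      _ = (1 + ν * x) * β := by ring
  have hmono : (∫ s in (0:ℝ)..T, (h s - ν * cum a' s) * Real.exp (-(cum a' s)) * a' s)
      ≤ ∫ s in (0:ℝ)..T, (1 - ν * cum a' s) * Real.exp (-(cum a' s)) * a' s := by
    refine intervalIntegral.integral_mono_on hT.le
      (hM h hmeas (fun s hs => abs_le.2 ⟨by linarith [(hrange s hs).1], (hrange s hs).2⟩))
      (hM (fun _ => 1) measurable_const (fun s _ => by norm_num)) (fun s hs => ?_)
    have he : 0 ≤ Real.exp (-(cum a' s)) := (Real.exp_pos _).le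
    exact mul_le_mul_of_nonneg_right
      (mul_le_mul_of_nonneg_right (by linarith [(hrange s hs).2]) he) (h0' s)
  have hsub : (∫ s in (0:ℝ)..T, (1 - ν * cum a' s) * Real.exp (-(cum a' s)) * a' s)
      = ∫ u in (0:ℝ)..x, (1 - ν * u) * Real.exp (-u) :=
    cum_subst T hT.le a' ha' h0' hsupp' haInt (fun u => (1 - ν * u) * Real.exp (-u))
      ((continuous_const.sub (continuous_const.mul continuous_id)).mul
        (Real.continuous_exp.comp continuous_neg))
  have hftc : (∫ u in (0:ℝ)..x, (1 - ν * u) * Real.exp (-u))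
      = (ν * (1 + x) - 1) * Real.exp (-x) - (ν - 1) := by
    have hd : ∀ u : ℝ, HasDerivAt (fun u => (ν * (1 + u) - 1) * Real.exp (-u))
        ((1 - ν * u) * Real.exp (-u)) u := by
      intro u
      have h1 : HasDerivAt (fun u : ℝ => ν * (1 + u) - 1) ν u := by
        simpa using (((hasDerivAt_id u).const_add 1).const_mul ν).sub_const 1
      have h2 : HasDerivAt (fun u : ℝ => Real.exp (-u)) (-Real.exp (-u)) u := by
        simpa using (HasDerivAt.exp (hasDerivAt_neg u))
      have : HasDerivAt (fun y => (ν * (1 + y) - 1) * Real.exp (-y)) _ u := h1.mul h2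
      convert this using 1
      ring
    rw [intervalIntegral.integral_eq_sub_of_hasDerivAt (fun u _ => hd u)
      (Continuous.intervalIntegrable ((continuous_const.sub
        (continuous_const.mul continuous_id)).mul
        (Real.continuous_exp.comp continuous_neg)) _ _)]
    simp [Real.exp_zero]
  have hE : Real.exp (-x) ≤ 1 := by
    rw [← Real.exp_zero]; exact Real.exp_le_exp.2 (by linarith)
  have hfin := hmono.trans (le_of_eq (hsub.trans hftc))
  unfold hPayoff
  rw [← hxdef]
  nlinarith [mul_nonneg (sub_nonneg.2 hν) (sub_nonneg.2 hE), Real.exp_pos (-x)]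

/-- Claim stated in the paper before Theorem 2: if `ν ≥ 1`, then for every
measurable `h : [0,T] → [0,1]` the payoff of every admissible control is
nonpositive, with equality for the zero control; in particular, in the
one-lock game remaining silent is a best response against every strategy of
the opponent, and both agents remaining silent is a Nash equilibrium. -/
theorem silence_optimal_nu_ge_one
    (T ν β : ℝ) (hT : 0 < T) (hβ : 0 < β) (hν : 1 ≤ ν)
    (h : ℝ → ℝ) (hmeas : Measurable h)
    (hrange : ∀ t ∈ Icc (0:ℝ) T, h t ∈ Icc (0:ℝ) 1) :
    (∀ a : ℝ → ℝ, Measurable a → (∀ t ∈ Icc (0:ℝ) T, a t ∈ Icc (0:ℝ) β) →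
        hPayoff T ν h a ≤ 0) ∧
    hPayoff T ν h (fun _ => 0) = 0 ∧
    -- remaining silent is a best response against every opponent strategy
    (∀ b : ℝ → ℝ, Measurable b → (∀ t ∈ Icc (0:ℝ) T, b t ∈ Icc (0:ℝ) β) →
      ∀ a : ℝ → ℝ, Measurable a → (∀ t ∈ Icc (0:ℝ) T, a t ∈ Icc (0:ℝ) β) →
        oneLockPayoff T ν a b ≤ oneLockPayoff T ν (fun _ => 0) b) ∧
    -- both agents remaining silent is a Nash equilibrium
    (∀ a : ℝ → ℝ, Measurable a → (∀ t ∈ Icc (0:ℝ) T, a t ∈ Icc (0:ℝ) β) →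
        oneLockPayoff T ν a (fun _ => 0)
          ≤ oneLockPayoff T ν (fun _ => 0) (fun _ => 0)) ∧
    (∀ b : ℝ → ℝ, Measurable b → (∀ t ∈ Icc (0:ℝ) T, b t ∈ Icc (0:ℝ) β) →
        oneLockPayoff T ν b (fun _ => 0)
          ≤ oneLockPayoff T ν (fun _ => 0) (fun _ => 0)) := by
  have key : ∀ h' : ℝ → ℝ, Measurable h' → (∀ t ∈ Icc (0:ℝ) T, h' t ∈ Icc (0:ℝ) 1) →
      ∀ a : ℝ → ℝ, Measurable a → (∀ t ∈ Icc (0:ℝ) T, a t ∈ Icc (0:ℝ) β) →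
      hPayoff T ν h' a ≤ 0 :=
    fun h' hm' hr' a ha har => hPayoff_nonpos T ν β hT hβ hν h' hm' hr' a ha har
  have vszero : ∀ a : ℝ → ℝ, Measurable a → (∀ t ∈ Icc (0:ℝ) T, a t ∈ Icc (0:ℝ) β) →
      oneLockPayoff T ν a (fun _ => 0) ≤ oneLockPayoff T ν (fun _ => 0) (fun _ => 0) := by
    intro a ha har
    have hzero : oneLockPayoff T ν (fun _ => 0) (fun _ => (0:ℝ)) = 0 := hPayoff_zero T ν _
    have heq1 : (fun s => Real.exp (-(cum (fun _ => (0:ℝ)) s))) = fun _ : ℝ => (1:ℝ) := by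
      funext s; simp [cum]
    have heq : oneLockPayoff T ν a (fun _ => 0) = hPayoff T ν (fun _ => 1) a := by
      show hPayoff T ν (fun s => Real.exp (-(cum (fun _ => (0:ℝ)) s))) a = _
      rw [heq1]
    rw [heq, hzero]
    exact key _ measurable_const (fun t _ => by norm_num) a ha har
  refine ⟨fun a ha har => key h hmeas hrange a ha har, hPayoff_zero T ν h, ?_, vszero, vszero⟩
  intro b hb hbr a ha har
  have hzero : oneLockPayoff T ν (fun _ => 0) b = 0 := hPayoff_zero T ν _
  obtain ⟨hb'm, hb'0, hb'β, hb'supp, hb'int⟩ := indicator_facts T β b hb hβ.le hbr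
  set b' := (Icc (0:ℝ) T).indicator b with hb'def
  have hcont : Continuous (cum b') :=
    intervalIntegral.continuous_primitive (fun u v => hb'int.intervalIntegrable) 0
  have hm' : Measurable fun s => Real.exp (-(cum b' s)) :=
    (Real.continuous_exp.comp hcont.neg).measurable
  have hr' : ∀ t ∈ Icc (0:ℝ) T, Real.exp (-(cum b' t)) ∈ Icc (0:ℝ) 1 := by
    intro t ht
    have h0 : 0 ≤ cum b' t := intervalIntegral.integral_nonneg ht.1 (fun u _ => hb'0 u)
    exact ⟨(Real.exp_pos _).le, by
      rw [← Real.exp_zero]; exact Real.exp_le_exp.2 (by linarith)⟩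
  have heq : oneLockPayoff T ν a b = hPayoff T ν (fun s => Real.exp (-(cum b' s))) a := by
    show hPayoff T ν (fun s => Real.exp (-(cum b s))) a = _
    exact hPayoff_congr T ν hT.le _ _ a (fun s hs => by rw [cum_indicator_eq T b s hs])
  rw [hzero, heq]
  exact key _ hm' hr' a ha har
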